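/- For any finite simplicial complex K and any sequence of distinct vertices v₁,…,v_n of K, the sequential vector field D_{v₁,…,v_n} is a gradient vector field, i.e. it has no closed gradient paths. -/

import Mathlib

/-- `σ` appears in some vector of the discrete vector field `D`. -/
def InVector {V : Type*} (D : Set (Finset V × Finset V)) (σ : Finset V) : Prop :=
  (∃ τ, (σ, τ) ∈ D) ∨ (∃ τ, (τ, σ) ∈ D)

/-- The critical simplices of a vector field `D` on a complex `K`: the
simplices of `K` appearing in no vector of `D`. -/
def critical {V : Type*} (K : Set (Finset V)) (D : Set (Finset V × Finset V)) :
    Set (Finset V) :=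
  {σ | σ ∈ K ∧ ¬ InVector D σ}

/-- One step in the construction of the sequential vector field: add to `D` all
vectors `(σ, σ ∪ {v})` where both `σ` and `σ ∪ {v}` are critical for `D`. -/
def extendField {V : Type*} [DecidableEq V] (K : Set (Finset V))
    (D : Set (Finset V × Finset V)) (v : V) : Set (Finset V × Finset V) :=
  D ∪ {q | ∃ σ : Finset V, q = (σ, insert v σ) ∧ v ∉ σ ∧
    σ ∈ critical K D ∧ insert v σ ∈ critical K D}

/-- The sequential vector field `D_{v₁,…,v_n}` determined by a list of
vertices, built by successively extending the empty vector field. -/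
def seqField {V : Type*} [DecidableEq V] (K : Set (Finset V)) (l : List V) :
    Set (Finset V × Finset V) :=
  l.foldl (extendField K) ∅

/-- `step a b` holds when the gradient path can continue from the vector `a`
to the vector `b`: the tail `b.1` is a codimension-1 face of the head `a.2`
distinct from `a.1`. -/
def step {V : Type*} (a b : Finset V × Finset V) : Prop :=
  b.1 ⊆ a.2 ∧ a.2.card = b.1.card + 1 ∧ b.1 ≠ a.1

/-- A vector field is gradient if no gradient path is a loop: for every
nonempty chain of vectors of `D` forming a gradient path, the path cannot
close up back to its starting simplex. -/
def IsGradient {V : Type*} (D : Set (Finset V × Finset V)) : Prop :=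
  ∀ (p : List (Finset V × Finset V)) (hp : p ≠ []),
    (∀ x ∈ p, x ∈ D) → p.Chain' step → ¬ step (p.getLast hp) (p.head hp)

section Aux

variable {V : Type*} [DecidableEq V]

lemma InVector.mono {D D' : Set (Finset V × Finset V)} (h : D ⊆ D') {σ : Finset V}
    (hσ : InVector D σ) : InVector D' σ := by
  rcases hσ with ⟨τ, hτ⟩ | ⟨τ, hτ⟩
  · exact Or.inl ⟨τ, h hτ⟩
  · exact Or.inr ⟨τ, h hτ⟩

lemma critical_anti {K : Set (Finset V)} {D D' : Set (Finset V × Finset V)} (h : D ⊆ D') :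
    critical K D' ⊆ critical K D :=
  fun _σ hσ => ⟨hσ.1, fun hin => hσ.2 (hin.mono h)⟩

lemma subset_extendField (K : Set (Finset V)) (D : Set (Finset V × Finset V)) (v : V) :
    D ⊆ extendField K D v := Set.subset_union_left

lemma subset_foldl (K : Set (Finset V)) (t : List V) :
    ∀ D : Set (Finset V × Finset V), D ⊆ t.foldl (extendField K) D := by
  induction t with
  | nil => intro D; simp
  | cons v t ih =>
    intro D
    exact (subset_extendField K D v).trans (by simpa using ih (extendField K D v))

lemma seqField_mono (K : Set (Finset V)) {l₁ l₂ : List V} (h : l₁ <+: l₂) :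
    seqField K l₁ ⊆ seqField K l₂ := by
  obtain ⟨t, rfl⟩ := h
  show seqField K l₁ ⊆ (l₁ ++ t).foldl (extendField K) ∅
  rw [List.foldl_append]
  exact subset_foldl K t _

/-- sharing a component -/
def Shares {V : Type*} (a b : Finset V × Finset V) : Prop :=
  a.1 = b.1 ∨ a.1 = b.2 ∨ a.2 = b.1 ∨ a.2 = b.2

lemma shares_invector {D : Set (Finset V × Finset V)} {a b : Finset V × Finset V}
    (hb : b ∈ D) (h : Shares a b) : InVector D a.1 ∨ InVector D a.2 := by
  rcases h with h | h | h | h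
  · exact Or.inl (Or.inl ⟨b.2, by rw [h]; exact hb⟩)
  · exact Or.inl (Or.inr ⟨b.1, by rw [h]; exact hb⟩)
  · exact Or.inr (Or.inl ⟨b.2, by rw [h]; exact hb⟩)
  · exact Or.inr (Or.inr ⟨b.1, by rw [h]; exact hb⟩)

def Matching {V : Type*} (D : Set (Finset V × Finset V)) : Prop :=
  ∀ a ∈ D, ∀ b ∈ D, Shares a b → a = b

lemma matching_extend (K : Set (Finset V)) {D : Set (Finset V × Finset V)}
    (hD : Matching D) (v : V) : Matching (extendField K D v) := by
  have hnew : ∀ a ∈ extendField K D v, a ∉ D →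
      ∃ σ : Finset V, a = (σ, insert v σ) ∧ v ∉ σ ∧
        σ ∈ critical K D ∧ insert v σ ∈ critical K D := by
    intro a ha hna
    rcases ha with ha | ha
    · exact absurd ha hna
    · exact ha
  have hcross : ∀ a, (∃ σ : Finset V, a = (σ, insert v σ) ∧ v ∉ σ ∧
      σ ∈ critical K D ∧ insert v σ ∈ critical K D) → ∀ b ∈ D, ¬ Shares a b := by
    rintro a ⟨σ, rfl, hv, h1, h2⟩ b hb hs
    rcases shares_invector hb hs with h | h
    · exact h1.2 h
    · exact h2.2 h
  intro a ha b hb hs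
  by_cases haD : a ∈ D <;> by_cases hbD : b ∈ D
  · exact hD a haD b hbD hs
  · -- b new, a old : use symmetry
    have hbn := hnew b hb hbD
    have hs' : Shares b a := by
      rcases hs with h | h | h | h
      · exact Or.inl h.symm
      · exact Or.inr (Or.inr (Or.inl h.symm))
      · exact Or.inr (Or.inl h.symm)
      · exact Or.inr (Or.inr (Or.inr h.symm))
    exact absurd hs' (hcross b hbn a haD)
  · exact absurd hs (hcross a (hnew a ha haD) b hbD)
  · obtain ⟨σ, rfl, hv, h1, h2⟩ := hnew a ha haD
    obtain ⟨σ', rfl, hv', h1', h2'⟩ := hnew b hb hbD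
    rcases hs with h | h | h | h
    · simp only at h; subst h; rfl
    · simp only at h; exact absurd (h ▸ Finset.mem_insert_self v σ') hv
    · simp only at h; exact absurd (h.symm ▸ Finset.mem_insert_self v σ) hv'
    · simp only at h
      have : σ = σ' := by
        rw [← Finset.erase_insert hv, ← Finset.erase_insert hv', h]
      subst this; rfl

lemma matching_foldl (K : Set (Finset V)) :
    ∀ (t : List V) (D : Set (Finset V × Finset V)), Matching D →
      Matching (t.foldl (extendField K) D) := by
  intro t
  induction t with
  | nil => intro D hD; simpa using hD
  | cons v t ih =>
    intro D hD
    simpa using ih (extendField K D v) (matching_extend K hD v)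

lemma matching_seqField (K : Set (Finset V)) (l : List V) : Matching (seqField K l) :=
  matching_foldl K l ∅ (fun a ha => absurd ha (Set.notMem_empty a))

lemma seqField_mem_decomp (K : Set (Finset V)) (l : List V) :
    ∀ a ∈ seqField K l,
      ∃ (l₁ : List V) (v : V) (l₂ : List V) (σ : Finset V),
        l = l₁ ++ v :: l₂ ∧ a = (σ, insert v σ) ∧ v ∉ σ ∧
        σ ∈ critical K (seqField K l₁) ∧ insert v σ ∈ critical K (seqField K l₁) := by
  induction l using List.reverseRecOn with
  | nil => intro a ha; simp [seqField] at ha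
  | append_singleton l' u ih =>
    intro a ha
    have hsf : seqField K (l' ++ [u]) = extendField K (seqField K l') u := by
      show (l' ++ [u]).foldl (extendField K) ∅ = _
      rw [List.foldl_append]
      rfl
    rw [hsf] at ha
    rcases ha with ha | ha
    · obtain ⟨l₁, v, l₂, σ, h1, h2, h3, h4, h5⟩ := ih a ha
      exact ⟨l₁, v, l₂ ++ [u], σ, by rw [h1]; simp, h2, h3, h4, h5⟩
    · obtain ⟨σ, rfl, hv, h1, h2⟩ := ha
      exact ⟨l', u, [], σ, rfl, rfl, hv, h1, h2⟩

end Aux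

/-- For a finite simplicial complex `K` and distinct vertices
`v₁, …, v_n` of `K`, the sequential vector field `D_{v₁,…,v_n}` is a gradient
vector field: it has no closed gradient paths. -/
theorem seqField_isGradient {V : Type*} [DecidableEq V] [Finite V]
    (K : Set (Finset V))
    (hne : ∀ σ ∈ K, σ.Nonempty)
    (hdown : ∀ σ ∈ K, ∀ τ : Finset V, τ ⊆ σ → τ.Nonempty → τ ∈ K)
    (l : List V) (hl : l.Nodup) (hvert : ∀ v ∈ l, ({v} : Finset V) ∈ K) :
    IsGradient (seqField K l) := by
  intro p hp hmem hchain hclose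
  obtain ⟨m, hm⟩ : ∃ m, p.length = m + 1 :=
    ⟨p.length - 1, (Nat.succ_pred_eq_of_pos (List.length_pos_iff.mpr hp)).symm⟩
  set D := seqField K l with hD
  -- the cyclic (periodic) sequence of vectors
  let a : ℕ → Finset V × Finset V :=
    fun k => p.get ⟨k % (m + 1), by rw [hm]; exact Nat.mod_lt _ (Nat.succ_pos m)⟩
  have hget : ∀ (k kr : ℕ) (h : kr < p.length), k % (m + 1) = kr → a k = p.get ⟨kr, h⟩ := by
    intro k kr h hk
    subst hk
    rfl
  have hamem : ∀ k, a k ∈ D := fun k => hmem _ (p.get_mem _)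
  have hper : ∀ k, a (k + (m + 1)) = a k := by
    intro k
    have h : k % (m + 1) < p.length := by rw [hm]; exact Nat.mod_lt _ (Nat.succ_pos m)
    rw [hget (k + (m + 1)) (k % (m + 1)) h (Nat.add_mod_right k (m + 1)),
      hget k (k % (m + 1)) h rfl]
  have hstep : ∀ k : ℕ, step (a k) (a (k + 1)) := by
    intro k
    have hdm := Nat.div_add_mod k (m + 1)
    set r := k % (m + 1) with hr
    have hrlt : r < m + 1 := Nat.mod_lt _ (Nat.succ_pos m)
    by_cases hcase : r < m
    · have hk1 : (k + 1) % (m + 1) = r + 1 := by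
        have h1 : k + 1 = (m + 1) * (k / (m + 1)) + (r + 1) := by omega
        rw [h1, Nat.mul_add_mod]
        exact Nat.mod_eq_of_lt (by omega)
      have := List.isChain_iff_getElem.mp hchain r (by omega)
      rw [hget k r (by omega) rfl, hget (k + 1) (r + 1) (by omega) hk1]
      exact this
    · have hrm : r = m := by omega
      have hk1 : (k + 1) % (m + 1) = 0 := by
        have h1 : k + 1 = (m + 1) * (k / (m + 1)) + (m + 1) := by omega
        rw [h1, Nat.mul_add_mod, Nat.mod_self]
      rw [hget k r (by omega) rfl, hget (k + 1) 0 (by omega) hk1]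
      have hlast : p.get ⟨r, by omega⟩ = p.getLast hp := by
        rw [List.getLast_eq_getElem]
        simp only [List.get_eq_getElem]
        congr 1
        omega
      have hhead : p.get ⟨0, by omega⟩ = p.head hp := by
        rw [List.head_eq_getElem]
        simp [List.get_eq_getElem]
      rw [hlast, hhead]
      exact hclose
  -- stage data
  have hdec : ∀ k : ℕ,
      ∃ (l₁ : List V) (v : V) (l₂ : List V) (σ : Finset V),
        l = l₁ ++ v :: l₂ ∧ a k = (σ, insert v σ) ∧ v ∉ σ ∧
        σ ∈ critical K (seqField K l₁) ∧ insert v σ ∈ critical K (seqField K l₁) :=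
    fun k => seqField_mem_decomp K l (a k) (hamem k)
  choose c v t σ hsplit hav hvn hc1 hc2 using hdec
  -- σ is determined by a, hence periodic
  have hσa : ∀ k, σ k = (a k).1 := fun k => by rw [hav k]
  have hσper : ∀ k, σ (k + (m + 1)) = σ k := by
    intro k
    rw [hσa, hσa, hper]
  -- pick an index of minimal stage
  have hminex : ∃ i₀ : ℕ, ∀ j : ℕ, (c i₀).length ≤ (c j).length := by
    have hne' : (Set.range fun k => (c k).length).Nonempty := ⟨(c 0).length, 0, rfl⟩
    obtain ⟨i₀, hi₀⟩ := Nat.sInf_mem hne'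
    exact ⟨i₀, fun j => le_trans (le_of_eq hi₀) (Nat.sInf_le ⟨j, rfl⟩)⟩
  obtain ⟨i₀, hmin⟩ := hminex
  set w := v i₀ with hw
  -- step facts in terms of σ
  have hsub : ∀ k : ℕ, σ (k + 1) ⊆ insert (v k) (σ k) := by
    intro k
    have := (hstep k).1
    rwa [hav k, hav (k + 1)] at this
  have hcard : ∀ k : ℕ, (insert (v k) (σ k)).card = (σ (k + 1)).card + 1 := by
    intro k
    have := (hstep k).2.1
    rwa [hav k, hav (k + 1)] at this
  have hnea : ∀ k : ℕ, σ (k + 1) ≠ σ k := by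
    intro k
    have := (hstep k).2.2
    rwa [hav k, hav (k + 1)] at this
  have hcards : ∀ k : ℕ, (σ (k + 1)).card = (σ k).card := by
    intro k
    have := hcard k
    rw [Finset.card_insert_of_notMem (hvn k)] at this
    omega
  -- the vertex of minimal stage enters the next simplex
  have hwin : w ∈ σ (i₀ + 1) := by
    by_contra hno
    have hsub' : σ (i₀ + 1) ⊆ σ i₀ := by
      intro x hx
      rcases Finset.mem_insert.mp (hsub i₀ hx) with h | h
      · exact absurd (show w ∈ σ (i₀ + 1) by rwa [h] at hx) hno
      · exact h
    exact hnea i₀ (Finset.eq_of_subset_of_card_le hsub' (by rw [hcards i₀]))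
  -- find a drop index
  have hdrop : ∃ j : ℕ, w ∈ σ j ∧ w ∉ σ (j + 1) := by
    by_contra hcon
    push_neg at hcon
    have key : ∀ k : ℕ, w ∈ σ (i₀ + 1 + k) := by
      intro k
      induction k with
      | zero => simpa using hwin
      | succ k ih => exact (add_assoc (i₀ + 1) k 1) ▸ hcon _ ih
    have h1 : i₀ + 1 + m = i₀ + (m + 1) := by omega
    have h2 := key m
    rw [h1, hσper] at h2
    exact hvn i₀ h2
  obtain ⟨j, hwj, hwj1⟩ := hdrop
  -- at the drop step, (σ (j+1), insert w (σ (j+1))) is a pair missed at stage i₀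
  have hτ : insert w (σ (j + 1)) = insert (v j) (σ j) := by
    apply Finset.eq_of_subset_of_card_le
    · apply Finset.insert_subset
      · exact Finset.mem_insert_of_mem hwj
      · exact hsub j
    · rw [Finset.card_insert_of_notMem hwj1, hcard j]
  -- prefix comparisons
  have hpre : ∀ k : ℕ, c k <+: l := fun k => ⟨v k :: t k, (hsplit k).symm⟩
  have hpresub : ∀ k : ℕ, seqField K (c i₀) ⊆ seqField K (c k) := fun k =>
    seqField_mono K (List.prefix_of_prefix_length_le (hpre i₀) (hpre k) (hmin k))
  -- criticality at the minimal stage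
  have hcrit1 : σ (j + 1) ∈ critical K (seqField K (c i₀)) :=
    critical_anti (hpresub (j + 1)) (hc1 (j + 1))
  have hcrit2 : insert w (σ (j + 1)) ∈ critical K (seqField K (c i₀)) := by
    rw [hτ]
    exact critical_anti (hpresub j) (hc2 j)
  -- the pair would have been matched at stage i₀
  have hnewpair : (σ (j + 1), insert w (σ (j + 1))) ∈ extendField K (seqField K (c i₀)) w :=
    Or.inr ⟨σ (j + 1), rfl, hwj1, hcrit1, hcrit2⟩
  have hsubD : extendField K (seqField K (c i₀)) w ⊆ D := by
    rw [hD]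
    conv_rhs => rw [hsplit i₀]
    show _ ⊆ (c i₀ ++ w :: t i₀).foldl (extendField K) ∅
    rw [List.foldl_append, List.foldl_cons]
    exact subset_foldl K (t i₀) _
  have hpairD : (σ (j + 1), insert w (σ (j + 1))) ∈ D := hsubD hnewpair
  -- contradiction with the matching property
  have heq := matching_seqField K l (σ (j + 1), insert w (σ (j + 1))) hpairD (a j) (hamem j)
    (Or.inr (Or.inr (Or.inr (by rw [hav j]; exact hτ))))
  rw [hav j] at heq
  have : σ (j + 1) = σ j := congrArg Prod.fst heq
  exact hnea j this
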